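/- Let W, D be n×n real matrices with nonnegative entries and let α, β ≥ 0. For every s ∈ S = {s ∈ ℝ^n : ‖s − 1‖_∞ ≤ 1} (so that all entries of s lie in [0, 2]), the GRASP operator satisfies ‖G(s) − 1‖_∞ ≤ (β‖D‖₁ + α‖W‖₁)·‖s‖_∞, where 1 denotes the all-ones vector. -/

import Mathlib

open Finset

/-- Maximum absolute column sum norm `‖A‖₁ = max_j ∑_i |A_{ij}|`. -/
noncomputable def matNorm1 {n : ℕ} (A : Matrix (Fin n) (Fin n) ℝ) : ℝ :=
  ⨆ j, ∑ i, |A i j|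

/-- The GRASP operator `G(s)_i = (1 + β (Dᵀ s)_i) / (1 + α (Wᵀ s)_i)`. -/
noncomputable def grasp {n : ℕ} (W D : Matrix (Fin n) (Fin n) ℝ) (α β : ℝ)
    (s : Fin n → ℝ) : Fin n → ℝ :=
  fun i => (1 + β * ∑ k, D k i * s k) / (1 + α * ∑ k, W k i * s k)

/-- For nonnegative matrices `W, D` and `α, β ≥ 0`, every `s` with `‖s - 1‖_∞ ≤ 1`
satisfies `‖G(s) - 1‖_∞ ≤ (β‖D‖₁ + α‖W‖₁) ‖s‖_∞`. -/
theorem grasp_dist_one_bound {n : ℕ} (W D : Matrix (Fin n) (Fin n) ℝ)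
    (hW : ∀ i j, 0 ≤ W i j) (hD : ∀ i j, 0 ≤ D i j)
    (α β : ℝ) (hα : 0 ≤ α) (hβ : 0 ≤ β)
    (s : Fin n → ℝ) (hs : ‖s - 1‖ ≤ 1) :
    ‖grasp W D α β s - 1‖ ≤ (β * matNorm1 D + α * matNorm1 W) * ‖s‖ := by
  have hsnn : ∀ k, 0 ≤ s k := by
    intro k
    have h1 : ‖(s - 1) k‖ ≤ 1 := (norm_le_pi_norm (s - 1) k).trans hs
    have h2 : |s k - 1| ≤ 1 := by simpa using h1
    have := abs_le.mp h2
    linarith [this.1]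
  have hsle : ∀ k, s k ≤ ‖s‖ := fun k =>
    (le_abs_self _).trans (by simpa using norm_le_pi_norm s k)
  have hD0 : 0 ≤ matNorm1 D := by
    rw [matNorm1]; exact Real.iSup_nonneg fun j => Finset.sum_nonneg fun i _ => abs_nonneg _
  have hW0 : 0 ≤ matNorm1 W := by
    rw [matNorm1]; exact Real.iSup_nonneg fun j => Finset.sum_nonneg fun i _ => abs_nonneg _
  have hRHS : 0 ≤ (β * matNorm1 D + α * matNorm1 W) * ‖s‖ :=
    mul_nonneg (add_nonneg (mul_nonneg hβ hD0) (mul_nonneg hα hW0)) (norm_nonneg s)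
  rw [pi_norm_le_iff_of_nonneg hRHS]
  intro i
  have ha : 0 ≤ ∑ k, W k i * s k :=
    Finset.sum_nonneg fun k _ => mul_nonneg (hW k i) (hsnn k)
  have hb : 0 ≤ ∑ k, D k i * s k :=
    Finset.sum_nonneg fun k _ => mul_nonneg (hD k i) (hsnn k)
  set a := ∑ k, W k i * s k with hadef
  set b := ∑ k, D k i * s k with hbdef
  have hden : 0 < 1 + α * a := by nlinarith
  have heq : grasp W D α β s i - 1 = (β * b - α * a) / (1 + α * a) := by
    rw [grasp, ← hadef, ← hbdef]
    field_simp
    ring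
  have habs : |grasp W D α β s i - 1| ≤ β * b + α * a := by
    rw [heq, abs_div, abs_of_pos hden]
    have h1 : |β * b - α * a| ≤ β * b + α * a := by
      rw [abs_le]
      constructor <;> nlinarith
    calc |β * b - α * a| / (1 + α * a) ≤ |β * b - α * a| :=
          div_le_self (abs_nonneg _) (by nlinarith)
      _ ≤ β * b + α * a := h1
  have hbound : ∀ (A : Matrix (Fin n) (Fin n) ℝ), (∀ i j, 0 ≤ A i j) →
      ∑ k, A k i * s k ≤ matNorm1 A * ‖s‖ := by
    intro A hA
    calc ∑ k, A k i * s k ≤ ∑ k, A k i * ‖s‖ := by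
          apply Finset.sum_le_sum
          intro k _
          exact mul_le_mul_of_nonneg_left (hsle k) (hA k i)
      _ = (∑ k, |A k i|) * ‖s‖ := by
          rw [← Finset.sum_mul]
          congr 1
          exact Finset.sum_congr rfl fun k _ => by rw [abs_of_nonneg (hA k i)]
      _ ≤ matNorm1 A * ‖s‖ := by
            refine mul_le_mul_of_nonneg_right ?_ (norm_nonneg s)
            rw [matNorm1]
            exact le_ciSup (f := fun j => ∑ k, |A k j|) (Set.Finite.bddAbove (Set.finite_range _)) i
  have hbD := hbound D hD
  have hbW := hbound W hW
  calc ‖grasp W D α β s i - 1‖ = |grasp W D α β s i - 1| := rfl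
    _ ≤ β * b + α * a := habs
    _ ≤ β * (matNorm1 D * ‖s‖) + α * (matNorm1 W * ‖s‖) := by
        exact add_le_add (mul_le_mul_of_nonneg_left hbD hβ)
          (mul_le_mul_of_nonneg_left hbW hα)
    _ = (β * matNorm1 D + α * matNorm1 W) * ‖s‖ := by ring
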